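/- For every λ ∈ Q', the stabilizer W_λ^∘ = {w ∈ W : w∘λ = λ} of λ under the circle action is generated by reflections in W (i.e. by W-conjugates of simple reflections). -/

import Mathlib

open scoped Classical

noncomputable section

/-- An axiomatization of the root datum of a Kac--Moody algebra `𝔤` associated to an
`n × n` generalized Cartan matrix, realized on the lattice `V` of integral weights
(the subgroup of `𝔥*` spanned by the weight lattice `P`, the root lattice `Q` and a
Weyl vector).  `alpha i` are the simple roots, `pair i v = v(α_i^∨)` is the pairing
with the simple coroots, and `mult β = dim 𝔤_β` is the root multiplicity function.  -/
structure KacMoody (n : ℕ) (V : Type) [AddCommGroup V] where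
  /-- the simple roots `α_i` -/
  alpha : Fin n → V
  /-- the pairing with the simple coroots, `pair i v = v(α_i^∨)` -/
  pair : Fin n → V →+ ℤ
  /-- the diagonal entries of the generalized Cartan matrix `a_{ij} = pair i (alpha j)` are `2` -/
  pair_self : ∀ i, pair i (alpha i) = 2
  /-- the off-diagonal entries of the generalized Cartan matrix are nonpositive -/
  pair_offdiag : ∀ i j, i ≠ j → pair i (alpha j) ≤ 0
  /-- `a_{ij} = 0 → a_{ji} = 0` -/
  pair_zero_iff : ∀ i j, pair i (alpha j) = 0 → pair j (alpha i) = 0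
  /-- the simple roots are linearly independent -/
  indep : ∀ c : Fin n → ℤ, ∑ i, c i • alpha i = 0 → ∀ i, c i = 0
  /-- root multiplicities: `mult β = dim 𝔤_β`; `β ≠ 0` is a root iff `mult β ≠ 0` -/
  mult : V → ℕ
  /-- simple roots are roots of multiplicity one -/
  mult_simple : ∀ i, mult (alpha i) = 1
  /-- every root is positive or negative -/
  root_pm : ∀ β : V, mult β ≠ 0 → β ≠ 0 →
    (∃ c : Fin n → ℕ, β = ∑ i, c i • alpha i) ∨ (∃ c : Fin n → ℕ, β = -∑ i, c i • alpha i)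
  /-- multiplicities are invariant under the simple reflections (hence under the Weyl group) -/
  mult_reflect : ∀ (i) (v : V), mult (v - pair i v • alpha i) = mult v
  /-- a given `μ` admits only finitely many partitions into positive roots (counted
  with multiplicity); this is automatic for genuine Kac--Moody root systems -/
  part_finite : ∀ μ : V,
    {p : Finset (V × ℕ) |
      (∀ x ∈ p, (mult x.1 ≠ 0 ∧ x.1 ≠ 0 ∧ x.1 ∈ {v : V | ∃ c : Fin n → ℕ,
          v = ∑ i, c i • alpha i}) ∧ 1 ≤ x.2 ∧ x.2 ≤ mult x.1) ∧
        ∑ x ∈ p, x.1 = μ}.Finite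

/-- the (multiplicative) group structure on `AddAut A` of the older Mathlib, where
`AddAut A` was a multiplicative group (`e₁ * e₂ = e₂.trans e₁`) -/
instance addAutGroupOld (A : Type*) [Add A] : Group (AddAut A) where
  mul g h := AddEquiv.trans h g
  one := AddEquiv.refl _
  inv := AddEquiv.symm
  mul_assoc _ _ _ := rfl
  one_mul _ := rfl
  mul_one _ := rfl
  inv_mul_cancel := AddEquiv.self_trans_symm

namespace KacMoody

variable {n : ℕ} {V : Type} [AddCommGroup V] (K : KacMoody n V)

/-- the positive root cone `Q⁺` (the `ℕ`-span of the simple roots) -/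
def QP : Set V := {v | ∃ c : Fin n → ℕ, v = ∑ i, c i • K.alpha i}

/-- `β` is a positive root of `𝔤` -/
def IsPosRoot (β : V) : Prop := K.mult β ≠ 0 ∧ β ≠ 0 ∧ β ∈ K.QP

/-- the underlying function of the simple reflection `s_i` -/
def sAux (i : Fin n) : V → V := fun v => v - K.pair i v • K.alpha i

lemma sAux_add (i : Fin n) (a b : V) : K.sAux i (a + b) = K.sAux i a + K.sAux i b := by
  simp only [sAux, map_add, add_smul]; abel

lemma sAux_invol (i : Fin n) : Function.Involutive (K.sAux i) := by
  intro v
  simp only [sAux, map_sub, map_zsmul, K.pair_self i, smul_eq_mul]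
  have h2 : K.pair i v - K.pair i v * 2 = -(K.pair i v) := by ring
  rw [h2, neg_smul, sub_neg_eq_add]
  abel

/-- the simple reflection `s_i`, as an automorphism of the weight lattice -/
def s (i : Fin n) : AddAut V :=
  { toFun := K.sAux i
    invFun := K.sAux i
    left_inv := K.sAux_invol i
    right_inv := K.sAux_invol i
    map_add' := K.sAux_add i }

/-- the Weyl group `W` of `𝔤`, realized as the subgroup of `Aut(𝔥*)` generated by the
simple reflections -/
def Wgrp : Subgroup (AddAut V) := Subgroup.closure (Set.range K.s)

/-- the length `ℓ(w)` of an element of the Weyl group: the minimal length of an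
expression of `w` as a product of simple reflections -/
def len (w : AddAut V) : ℕ :=
  sInf {k | ∃ l : List (Fin n), l.length = k ∧ (l.map K.s).prod = w}

/-- the set `P⁺` of dominant integral weights -/
def Pplus : Set V := {v | ∀ i, 0 ≤ K.pair i v}

/-- `β` is a real root: it is `W`-conjugate to a simple root -/
def IsRealRoot (β : V) : Prop := ∃ w ∈ K.Wgrp, ∃ i, w (K.alpha i) = β

/-- `β` is an imaginary root: a root that is not real -/
def IsImRoot (β : V) : Prop := K.mult β ≠ 0 ∧ β ≠ 0 ∧ ¬K.IsRealRoot β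

/-- the cone `Q⁻_im` generated by the negative imaginary roots -/
def coneIm : Set V :=
  (AddSubmonoid.closure {v : V | K.IsImRoot v ∧ -v ∈ K.QP} : AddSubmonoid V)

/-- the element of `Q⁺` with coordinates `c` in the basis of simple roots -/
def toV (c : Fin n →₀ ℕ) : V := ∑ i, c i • K.alpha i

/-- the coordinates of an element of `Q⁺` in the basis of simple roots -/
def coordOf (v : V) : Fin n →₀ ℕ :=
  if h : ∃ c : Fin n →₀ ℕ, K.toV c = v then h.choose else 0

/-- `p` is an admissible partition of `μ`: a finite subset of
`𝒫 = {(α, i) : α ∈ Φ⁺, 1 ≤ i ≤ mult α}` whose parts sum to `μ` -/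
def IsPart (μ : V) (p : Finset (V × ℕ)) : Prop :=
  (∀ x ∈ p, (K.mult x.1 ≠ 0 ∧ x.1 ≠ 0 ∧ x.1 ∈ K.QP) ∧ 1 ≤ x.2 ∧ x.2 ≤ K.mult x.1) ∧
    ∑ x ∈ p, x.1 = μ

lemma isPart_finite (μ : V) : {p : Finset (V × ℕ) | K.IsPart μ p}.Finite := K.part_finite μ

/-- the finite set `𝒫(μ)` of admissible partitions of `μ` -/
def partsFinset (μ : V) : Finset (Finset (V × ℕ)) := (K.isPart_finite μ).toFinset

/-- the Kim--Lee function `H(μ; q) = Σ_{𝔭 ∈ 𝒫(μ)} (-q)^{|𝔭|}`, i.e. the coefficient of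
`e^{-μ}` in `Π_{α ∈ Φ⁺} (1 - q e^{-α})^{mult α}` -/
def H (μ : V) : Polynomial ℤ := ∑ p ∈ K.partsFinset μ, (-Polynomial.X) ^ p.card

/-- the Weyl denominator `Π_{α ∈ Φ⁺} (1 - e^{-α})^{mult α}`, expanded as a formal sum;
the coefficient at `c` is the coefficient of `e^{-toV c}` -/
def den : MvPowerSeries (Fin n) ℤ :=
  fun c => ∑ p ∈ K.partsFinset (K.toV c), (-1 : ℤ) ^ p.card

/-- `ξ^λ = Σ_{w ∈ W} (-1)^{ℓ(w)} e^{w∘λ}` as a formal sum supported on `Q⁻`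
(for `λ ∈ Q'`); the coefficient at `c` is the coefficient of `e^{-toV c}` -/
def xiMv (ρ lam : V) : MvPowerSeries (Fin n) ℤ :=
  fun c => ∑ᶠ w ∈ {w : AddAut V | w ∈ K.Wgrp ∧ w (lam + ρ) - ρ = -K.toV c},
    (-1 : ℤ) ^ K.len w

/-- the Poincaré series `χ(q) = Σ_{w ∈ W} q^{ℓ(w)}` of the Weyl group -/
def chiPS : PowerSeries ℤ :=
  PowerSeries.mk fun k => (Nat.card {w : AddAut V | w ∈ K.Wgrp ∧ K.len w = k} : ℤ)

/-- the inversion set `Φ(w⁻¹) = {α ∈ Φ⁺ : wα < 0}` -/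
def Inversions (w : AddAut V) : Set V := {β | K.IsPosRoot β ∧ -(w β) ∈ K.QP}

/-- the number of inversions of `w`, counted with multiplicity -/
def NInv (w : AddAut V) : ℕ := ∑ᶠ β ∈ K.Inversions w, K.mult β

/-- a finite subset of `𝒫 = {(α, i) : α ∈ Φ⁺, 1 ≤ i ≤ mult α}` -/
def IsChoice (p : Finset (V × ℕ)) : Prop :=
  ∀ x ∈ p, K.IsPosRoot x.1 ∧ 1 ≤ x.2 ∧ x.2 ≤ K.mult x.1

/-- the formal sum expansion of `Δ^w`, the image of
`Δ = Π_{α ∈ Φ⁺} ((1 - q e^{-α})/(1 - e^{-α}))^{mult α}` under `w ∈ W`: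
`Δ^w = Π_{α ∈ Φ(w⁻¹)} ((q - e^{-α})/(1 - e^{-α})) ·
Π_{α ∈ Φ⁺ ∖ Φ(w⁻¹)} ((1 - q e^{-α})/(1 - e^{-α}))^{mult α}`, where numerators are
expanded by choosing a finite subset `pf.1` of `𝒫` and denominators by choosing a
finitely supported multiset `pf.2` on `𝒫`. -/
def deltaW (w : AddAut V) : MvPowerSeries (Fin n) (PowerSeries ℤ) :=
  fun c =>
    ∑ᶠ pf ∈ {pf : Finset (V × ℕ) × ((V × ℕ) →₀ ℕ) |
        K.IsChoice pf.1 ∧ (∀ x ∈ pf.2.support, K.IsPosRoot x.1 ∧ 1 ≤ x.2 ∧ x.2 ≤ K.mult x.1) ∧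
        (∑ x ∈ pf.1, x.1) + (pf.2.sum fun x k => k • x.1) = K.toV c},
      ((-1 : ℤ) ^ pf.1.card) •
        (PowerSeries.X : PowerSeries ℤ) ^
          (K.NInv w + (pf.1.filter fun x => x.1 ∉ K.Inversions w).card
            - (pf.1.filter fun x => x.1 ∈ K.Inversions w).card)

/-- the formal sum `ℳ(q) = Σ_{w ∈ W} Δ^w`, a formal sum supported on `Q⁻` with
coefficients in `ℤ[[q]]`; the coefficient at `c` is the coefficient of `e^{-toV c}` -/
def Mcal : MvPowerSeries (Fin n) (PowerSeries ℤ) :=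
  fun c => PowerSeries.mk fun m =>
    ∑ᶠ w ∈ {w : AddAut V | w ∈ K.Wgrp},
      PowerSeries.coeff m (MvPowerSeries.coeff c (K.deltaW w))

/-- `Q' = ⋂_{w ∈ W} w ∘ Q⁻`, where `∘` is the circle (dot) action `w ∘ λ = w(λ+ρ) - ρ` -/
def Qprime (ρ : V) : Set V := {v | ∀ w ∈ K.Wgrp, -(w (v + ρ) - ρ) ∈ K.QP}

/-- `ξ^λ = Σ_{w ∈ W} (-1)^{ℓ(w)} e^{w∘λ}` as a formal sum on all of `𝔥*`:
`xiFun ρ lam v` is the coefficient of `e^v` -/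
def xiFun (ρ lam : V) : V → ℤ :=
  fun v => ∑ᶠ w ∈ {w : AddAut V | w ∈ K.Wgrp ∧ w (lam + ρ) - ρ = v}, (-1 : ℤ) ^ K.len w

/-- the numerator `Σ_{w ∈ W} (-1)^{ℓ(w)} e^{w(λ+ρ)}` of `π^λ`, as a formal sum:
`numFun ρ lam v` is the coefficient of `e^v` -/
def numFun (ρ lam : V) : V → ℤ :=
  fun v => ∑ᶠ w ∈ {w : AddAut V | w ∈ K.Wgrp ∧ w (lam + ρ) = v}, (-1 : ℤ) ^ K.len w

/-- the map `φ_i : 𝒫(-λ) → 𝒫(-s_i ∘ λ)` on admissible partitions -/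
def phi (i : Fin n) (p : Finset (V × ℕ)) : Finset (V × ℕ) :=
  if ∃ x ∈ p, x.1 = K.alpha i then
    (p.filter fun x => x.1 ≠ K.alpha i).image fun x => (K.s i x.1, x.2)
  else insert (K.alpha i, 1) (p.image fun x => (K.s i x.1, x.2))

/-- `m(𝔭, w) = |𝔭| - 2 ⬝ #{(β, j) ∈ 𝔭 : wβ < 0}` -/
def mpw (w : AddAut V) (p : Finset (V × ℕ)) : ℤ :=
  (p.card : ℤ) - 2 * (p.filter fun x => -(w x.1) ∈ K.QP ∧ w x.1 ≠ 0).card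

/-- `|wβ|`: the positive root among `± wβ` -/
def wabs (w : AddAut V) (β : V) : V := if -(w β) ∈ K.QP then -(w β) else w β

/-- `Σ_{α ∈ Φ(w⁻¹)} mult α • (-wα)`, the forced monomial appearing when `w` acts on the
Weyl denominator -/
def invWt (w : AddAut V) : V := ∑ᶠ β ∈ K.Inversions w, K.mult β • (-(w β))

/-- the series part of the expansion of `w(Π_{α ∈ Φ⁺} (1 - e^{-α})^{mult α})`:
by the defining action `w(1 - e^{-α}) = 1 - e^{-wα}` if `wα > 0` and
`w(1 - e^{-α}) = (-e^{-wα})(1 - e^{wα})` if `wα < 0`, one has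
`w(Π_{α ∈ Φ⁺} (1 - e^{-α})^{mult α}) = (-1)^{NInv w} e^{invWt w} · wDen w`, where
`wDen w = Π_{α ∈ Φ⁺, (α,i) ∈ 𝒫} (1 - e^{-|wα|})`; the coefficient at `c` is the
coefficient of `e^{-toV c}` -/
def wDen (w : AddAut V) : MvPowerSeries (Fin n) ℤ :=
  fun c => ∑ᶠ p ∈ {p : Finset (V × ℕ) | K.IsChoice p ∧
      (∑ x ∈ p, K.wabs w x.1) = K.toV c},
    (-1 : ℤ) ^ p.card

/-- for a word `l = (i_1, …, i_ℓ)`, the root `s_{i_1} ⋯ s_{i_{k-1}} (α_{i_k})` -/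
def prefixRoot (l : List (Fin n)) (k : Fin l.length) : V :=
  ((l.take k).map K.s).prod (K.alpha (l.get k))

end KacMoody

@[simp] lemma addAutOld_mul_apply {A : Type*} [Add A] (e₁ e₂ : AddAut A) (m : A) :
    (e₁ * e₂) m = e₁ (e₂ m) := rfl

@[simp] lemma addAutOld_one_apply {A : Type*} [Add A] (m : A) : (1 : AddAut A) m = m := rfl

/-! ### Auxiliary development for the circle stabilizer theorem -/

section CircleStabilizerAux

open CoxeterSystem

namespace KacMoody

variable {n : ℕ} {V : Type} [AddCommGroup V] (K : KacMoody n V)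

@[simp] lemma s_apply (i : Fin n) (v : V) :
    K.s i v = v - K.pair i v • K.alpha i := rfl

lemma coords_injZ {c d : Fin n → ℤ}
    (h : ∑ i, c i • K.alpha i = ∑ i, d i • K.alpha i) : c = d := by
  funext i
  have h0 : ∑ i, (c - d) i • K.alpha i = 0 := by
    simp only [Pi.sub_apply, sub_smul, Finset.sum_sub_distrib, h, sub_self]
  have := K.indep (c - d) h0 i
  simpa [sub_eq_zero] using this

lemma mem_QP_iff {v : V} :
    v ∈ K.QP ↔ ∃ c : Fin n → ℕ, v = ∑ i, (c i : ℤ) • K.alpha i := by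
  unfold QP
  simp [natCast_zsmul]

lemma QP_zero : (0 : V) ∈ K.QP := ⟨0, by simp⟩

lemma QP_add {x y : V} (hx : x ∈ K.QP) (hy : y ∈ K.QP) : x + y ∈ K.QP := by
  rw [K.mem_QP_iff] at hx hy ⊢
  obtain ⟨c, rfl⟩ := hx; obtain ⟨d, rfl⟩ := hy
  exact ⟨c + d, by simp [add_smul, Finset.sum_add_distrib]⟩

lemma QP_alpha (i : Fin n) : K.alpha i ∈ K.QP := by
  rw [K.mem_QP_iff]
  refine ⟨fun k => if k = i then 1 else 0, ?_⟩
  simp [ite_smul, Finset.sum_ite_eq']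

lemma QP_zsmul {x : V} (hx : x ∈ K.QP) {t : ℤ} (ht : 0 ≤ t) : t • x ∈ K.QP := by
  rw [K.mem_QP_iff] at hx ⊢
  obtain ⟨c, rfl⟩ := hx
  refine ⟨fun k => t.toNat * c k, ?_⟩
  rw [Finset.smul_sum]
  refine Finset.sum_congr rfl fun k _ => ?_
  rw [smul_smul]
  congr 1
  push_cast
  rw [Int.toNat_of_nonneg ht]

lemma eq_zero_of_QP_of_neg_QP {x : V} (hx : x ∈ K.QP) (hx' : -x ∈ K.QP) : x = 0 := by
  rw [K.mem_QP_iff] at hx hx'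
  obtain ⟨c, hc⟩ := hx; obtain ⟨d, hd⟩ := hx'
  have h0 : ∀ k, (c k : ℤ) + d k = 0 := by
    have hsum : ∑ i, ((fun k => (c k : ℤ) + (d k : ℤ)) i) • K.alpha i
        = ∑ i, ((0 : Fin n → ℤ) i) • K.alpha i := by
      simp only [add_smul, Finset.sum_add_distrib, ← hc, ← hd]
      simp
    intro k
    have := congrFun (K.coords_injZ hsum) k
    simpa using this
  have hc0 : ∀ k, (c k : ℤ) = 0 := fun k => by
    have := h0 k
    have h1 : (0:ℤ) ≤ c k := Int.natCast_nonneg _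
    have h2 : (0:ℤ) ≤ d k := Int.natCast_nonneg _
    omega
  rw [hc]
  refine Finset.sum_eq_zero fun k _ => ?_
  rw [hc0 k, zero_smul]

lemma alpha_ne_zero (i : Fin n) : K.alpha i ≠ 0 := by
  intro h
  have h0 : ∑ k, (fun k => if k = i then (1:ℤ) else 0) k • K.alpha k = 0 := by
    simp [ite_smul, Finset.sum_ite_eq', h]
  have := K.indep _ h0 i
  simp at this

/-- the height of an element of `Q⁺`. -/
noncomputable def htQ (x : V) : ℕ :=
  if h : x ∈ K.QP then ∑ i, h.choose i else 0

lemma coords_injN {c d : Fin n → ℕ}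
    (h : ∑ i, c i • K.alpha i = ∑ i, d i • K.alpha i) : c = d := by
  have h' : ∑ i, ((c i : ℤ)) • K.alpha i = ∑ i, ((d i : ℤ)) • K.alpha i := by
    simpa [natCast_zsmul] using h
  have := K.coords_injZ h'
  funext k
  have := congrFun this k
  exact_mod_cast this

lemma htQ_eq {x : V} (c : Fin n → ℕ) (h : x = ∑ i, c i • K.alpha i) :
    K.htQ x = ∑ i, c i := by
  have hx : x ∈ K.QP := ⟨c, h⟩
  rw [htQ, dif_pos hx]
  have hspec : x = ∑ i, hx.choose i • K.alpha i := hx.choose_spec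
  have : hx.choose = c := K.coords_injN (by rw [← hspec, ← h])
  rw [this]

lemma htQ_add_zsmul {x : V} (hx : x ∈ K.QP) (i : Fin n) (t : ℤ)
    (h2 : x + t • K.alpha i ∈ K.QP) :
    (K.htQ (x + t • K.alpha i) : ℤ) = (K.htQ x : ℤ) + t := by
  obtain ⟨c, hc⟩ := hx
  obtain ⟨c', hc'⟩ := h2
  have hc'' : ∑ k, ((c' k : ℤ)) • K.alpha k
      = ∑ k, ((fun k => (c k : ℤ) + if k = i then t else 0) k) • K.alpha k := by
    have l1 : x + t • K.alpha i = ∑ k, ((c' k : ℤ)) • K.alpha k := by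
      rw [hc']; simp [natCast_zsmul]
    have l2 : x = ∑ k, ((c k : ℤ)) • K.alpha k := by
      rw [hc]; simp [natCast_zsmul]
    rw [← l1, l2]
    simp only [add_smul, Finset.sum_add_distrib, ite_smul, zero_smul, Finset.sum_ite_eq']
    simp
  have hcoord := K.coords_injZ hc''
  have h1 : K.htQ (x + t • K.alpha i) = ∑ k, c' k := K.htQ_eq c' hc'
  have h0 : K.htQ x = ∑ k, c k := K.htQ_eq c hc
  rw [h1, h0]
  push_cast
  calc (∑ k, (c' k : ℤ)) = ∑ k, ((c k : ℤ) + if k = i then t else 0) := by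
        refine Finset.sum_congr rfl fun k _ => ?_
        exact congrFun hcoord k
    _ = (∑ k, (c k : ℤ)) + t := by
        rw [Finset.sum_add_distrib]
        simp [Finset.sum_ite_eq']

end KacMoody

end CircleStabilizerAux

/-! ### Rank-2 computations -/

section Rank2Aux

/-- coefficient transition for left-multiplication by `s i`. -/
def SIc (a : ℤ) (c : ℤ × ℤ × ℤ × ℤ) : ℤ × ℤ × ℤ × ℤ :=
  (-c.1 - 1 - a * c.2.2.1, -c.2.1 - a * c.2.2.2, c.2.2.1, c.2.2.2)

/-- coefficient transition for left-multiplication by `s j`. -/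
def SJc (b : ℤ) (c : ℤ × ℤ × ℤ × ℤ) : ℤ × ℤ × ℤ × ℤ :=
  (c.1, c.2.1, -c.2.2.1 - b * c.1, -c.2.2.2 - 1 - b * c.2.1)

/-- the coefficients of the alternating-word images of `α i`. -/
def uS (a b : ℤ) : ℕ → ℤ × ℤ
  | 0 => (1, 0)
  | q + 1 =>
    if Even q then ((uS a b q).1, -b * (uS a b q).1 - (uS a b q).2)
    else (-a * (uS a b q).2 - (uS a b q).1, (uS a b q).2)

lemma uS_nonneg_ge4 {a b : ℤ} (ha : a ≤ 0) (hb : b ≤ 0) (h4 : 4 ≤ a * b) (q : ℕ) :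
    1 ≤ (uS a b q).1 ∧ 0 ≤ (uS a b q).2 ∧
      (Even q → 2 * (uS a b q).2 ≤ (-b) * (uS a b q).1) ∧
      (¬Even q → 2 * (uS a b q).1 ≤ (-a) * (uS a b q).2) := by
  induction q with
  | zero => refine ⟨le_refl 1, le_refl 0, fun _ => by simp [uS]; omega, fun h => absurd Even.zero h⟩
  | succ q ih =>
    obtain ⟨hX, hY, hE, hO⟩ := ih
    by_cases hq : Even q
    · have hEq := hE hq
      have hq' : ¬Even (q + 1) := by simp [Nat.even_add_one, hq]
      simp only [uS, if_pos hq]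
      refine ⟨hX, by nlinarith, fun h => absurd h hq', fun _ => ?_⟩
      nlinarith [mul_le_mul_of_nonneg_left hEq (by linarith : (0:ℤ) ≤ -a)]
    · have hOq := hO hq
      have hq' : Even (q + 1) := by simp [Nat.even_add_one, hq]
      simp only [uS, if_neg hq]
      refine ⟨by nlinarith, hY, fun _ => ?_, fun h => absurd hq' h⟩
      nlinarith [mul_le_mul_of_nonneg_left hOq (by linarith : (0:ℤ) ≤ -b)]

lemma uS_nonneg_cases {a b : ℤ} (ha : a ≤ 0) (hb : b ≤ 0) (q : ℕ)
    (h : (a = 0 ∧ b = 0 ∧ q < 2) ∨ (a = -1 ∧ b = -1 ∧ q < 3) ∨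
      (((a = -1 ∧ b = -2) ∨ (a = -2 ∧ b = -1)) ∧ q < 4) ∨
      (((a = -1 ∧ b = -3) ∨ (a = -3 ∧ b = -1)) ∧ q < 6) ∨ 4 ≤ a * b) :
    0 ≤ (uS a b q).1 ∧ 0 ≤ (uS a b q).2 := by
  rcases h with ⟨rfl, rfl, hq⟩ | ⟨rfl, rfl, hq⟩ | ⟨(⟨rfl, rfl⟩ | ⟨rfl, rfl⟩), hq⟩ |
    ⟨(⟨rfl, rfl⟩ | ⟨rfl, rfl⟩), hq⟩ | h4
  · interval_cases q <;> norm_num [uS, Nat.even_iff]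
  · interval_cases q <;> norm_num [uS, Nat.even_iff]
  · interval_cases q <;> norm_num [uS, Nat.even_iff]
  · interval_cases q <;> norm_num [uS, Nat.even_iff]
  · interval_cases q <;> norm_num [uS, Nat.even_iff]
  · interval_cases q <;> norm_num [uS, Nat.even_iff]
  · obtain ⟨h1, h2, _, _⟩ := uS_nonneg_ge4 ha hb h4 q
    exact ⟨by linarith, h2⟩

/-- helper: factorizations of small products of nonpositive integers. -/
lemma int_small_prod {a b : ℤ} (ha : a ≤ 0) (hb : b ≤ 0) :
    (a * b = 1 → a = -1 ∧ b = -1) ∧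
    (a * b = 2 → (a = -1 ∧ b = -2) ∨ (a = -2 ∧ b = -1)) ∧
    (a * b = 3 → (a = -1 ∧ b = -3) ∨ (a = -3 ∧ b = -1)) := by
  have key : ∀ k : ℤ, a * b = k → (-a) ∣ k := fun k hab => ⟨-b, by linarith [hab]⟩
  refine ⟨?_, ?_, ?_⟩ <;> intro hab
  · have h2 : -a ≤ 1 := Int.le_of_dvd one_pos (key 1 hab)
    have ha3 : a = 0 ∨ a = -1 := by omega
    rcases ha3 with rfl | rfl
    · omega
    · exact ⟨rfl, by omega⟩
  · have h2 : -a ≤ 2 := Int.le_of_dvd (by norm_num) (key 2 hab)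
    have ha3 : a = 0 ∨ a = -1 ∨ a = -2 := by omega
    rcases ha3 with rfl | rfl | rfl
    · omega
    · exact Or.inl ⟨rfl, by omega⟩
    · exact Or.inr ⟨rfl, by omega⟩
  · have h2 : -a ≤ 3 := Int.le_of_dvd (by norm_num) (key 3 hab)
    have ha3 : a = 0 ∨ a = -1 ∨ a = -2 ∨ a = -3 := by omega
    rcases ha3 with rfl | rfl | rfl | rfl
    · omega
    · exact Or.inl ⟨rfl, by omega⟩
    · omega
    · exact Or.inr ⟨rfl, by omega⟩

end Rank2Aux

namespace KacMoody

variable {n : ℕ} {V : Type} [AddCommGroup V] (K : KacMoody n V)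

/-- `g` acts on `V` with the coefficient data `c` relative to the rank-2 pair `(i, j)`. -/
def Rep (i j : Fin n) (c : ℤ × ℤ × ℤ × ℤ) (g : AddAut V) : Prop :=
  ∀ v : V, g v = v + (c.1 * K.pair i v + c.2.1 * K.pair j v) • K.alpha i
    + (c.2.2.1 * K.pair i v + c.2.2.2 * K.pair j v) • K.alpha j

lemma rep_one (i j : Fin n) : K.Rep i j (0, 0, 0, 0) 1 := by
  intro v; simp

lemma rep_stepI {i j : Fin n} (hij : i ≠ j) {c : ℤ × ℤ × ℤ × ℤ} {g : AddAut V}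
    (h : K.Rep i j c g) : K.Rep i j (SIc (K.pair i (K.alpha j)) c) (K.s i * g) := by
  intro v
  rw [addAutOld_mul_apply, h v, K.s_apply]
  simp only [SIc, map_add, map_zsmul, K.pair_self, smul_eq_mul]
  module

lemma rep_stepJ {i j : Fin n} (hij : i ≠ j) {c : ℤ × ℤ × ℤ × ℤ} {g : AddAut V}
    (h : K.Rep i j c g) : K.Rep i j (SJc (K.pair j (K.alpha i)) c) (K.s j * g) := by
  intro v
  rw [addAutOld_mul_apply, h v, K.s_apply]
  simp only [SJc, map_add, map_zsmul, K.pair_self, smul_eq_mul]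
  module

lemma rep_pow {i j : Fin n} (hij : i ≠ j) (m : ℕ) :
    K.Rep i j ((fun c => SIc (K.pair i (K.alpha j)) (SJc (K.pair j (K.alpha i)) c))^[m]
      (0, 0, 0, 0)) ((K.s i * K.s j) ^ m) := by
  induction m with
  | zero => simpa using K.rep_one i j
  | succ m ih =>
    rw [pow_succ', Function.iterate_succ_apply']
    have h1 := K.rep_stepJ hij ih
    have h2 := K.rep_stepI hij h1
    rw [mul_assoc]
    exact h2

lemma eq_one_of_rep_zero {i j : Fin n} {g : AddAut V}
    (h : K.Rep i j (0, 0, 0, 0) g) : g = 1 := by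
  ext v
  have := h v
  simpa using this

end KacMoody

namespace KacMoody

variable {n : ℕ} {V : Type} [AddCommGroup V] (K : KacMoody n V)

/-- the Coxeter matrix associated to the generalized Cartan matrix of `K`. -/
def CM : CoxeterMatrix (Fin n) where
  M := Matrix.of fun i j =>
    if i = j then 1
    else if K.pair i (K.alpha j) * K.pair j (K.alpha i) = 0 then 2
    else if K.pair i (K.alpha j) * K.pair j (K.alpha i) = 1 then 3
    else if K.pair i (K.alpha j) * K.pair j (K.alpha i) = 2 then 4
    else if K.pair i (K.alpha j) * K.pair j (K.alpha i) = 3 then 6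
    else 0
  isSymm := by
    unfold Matrix.IsSymm
    ext i j
    simp only [Matrix.transpose_apply, Matrix.of_apply]
    by_cases h : i = j
    · simp [h]
    · simp only [h, Ne.symm h, if_false, mul_comm]
  diagonal := by intro i; simp
  off_diagonal := by
    intro i j h
    simp only [Matrix.of_apply, h, if_false]
    split <;> try norm_num
    split <;> try norm_num
    split <;> try norm_num
    split <;> norm_num

lemma CM_apply_ne {i j : Fin n} (hij : i ≠ j) :
    K.CM i j = (if K.pair i (K.alpha j) * K.pair j (K.alpha i) = 0 then 2
    else if K.pair i (K.alpha j) * K.pair j (K.alpha i) = 1 then 3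
    else if K.pair i (K.alpha j) * K.pair j (K.alpha i) = 2 then 4
    else if K.pair i (K.alpha j) * K.pair j (K.alpha i) = 3 then 6
    else 0) := by
  show Matrix.of _ i j = _
  simp [hij]

lemma s_sq (i : Fin n) : K.s i * K.s i = 1 := by
  ext v
  rw [addAutOld_mul_apply]
  exact K.sAux_invol i v

lemma braid_of_tuple_zero {i j : Fin n} (hij : i ≠ j) (m : ℕ)
    (h : (fun c => SIc (K.pair i (K.alpha j)) (SJc (K.pair j (K.alpha i)) c))^[m]
      (0, 0, 0, 0) = (0, 0, 0, 0)) :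
    (K.s i * K.s j) ^ m = 1 := by
  have := K.rep_pow hij m
  rw [h] at this
  exact K.eq_one_of_rep_zero this

lemma isLiftable : CoxeterMatrix.IsLiftable K.CM K.s := by
  intro i j
  by_cases hij : i = j
  · subst hij
    have : K.CM i i = 1 := K.CM.diagonal i
    rw [this, pow_one]
    exact K.s_sq i
  · set a := K.pair i (K.alpha j) with ha
    set b := K.pair j (K.alpha i) with hb
    have hA : a ≤ 0 := K.pair_offdiag i j hij
    have hB : b ≤ 0 := K.pair_offdiag j i (Ne.symm hij)
    rw [K.CM_apply_ne hij, ← ha, ← hb]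
    by_cases h0 : a * b = 0
    · have ha0 : a = 0 ∧ b = 0 := by
        rcases mul_eq_zero.mp h0 with h | h
        · exact ⟨h, K.pair_zero_iff i j (ha ▸ h)⟩
        · exact ⟨K.pair_zero_iff j i (hb ▸ h), h⟩
      rw [if_pos h0]
      apply K.braid_of_tuple_zero hij
      rw [← ha, ← hb, ha0.1, ha0.2]
      decide
    · rw [if_neg h0]
      by_cases h1 : a * b = 1
      · obtain ⟨ha1, hb1⟩ := (int_small_prod hA hB).1 h1
        rw [if_pos h1]
        apply K.braid_of_tuple_zero hij
        rw [← ha, ← hb, ha1, hb1]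
        decide
      · rw [if_neg h1]
        by_cases h2 : a * b = 2
        · rw [if_pos h2]
          apply K.braid_of_tuple_zero hij
          rcases (int_small_prod hA hB).2.1 h2 with ⟨ha2, hb2⟩ | ⟨ha2, hb2⟩ <;>
            rw [← ha, ← hb, ha2, hb2] <;> decide
        · rw [if_neg h2]
          by_cases h3 : a * b = 3
          · rw [if_pos h3]
            apply K.braid_of_tuple_zero hij
            rcases (int_small_prod hA hB).2.2 h3 with ⟨ha3, hb3⟩ | ⟨ha3, hb3⟩ <;>
              rw [← ha, ← hb, ha3, hb3] <;> decide
          · rw [if_neg h3, pow_zero]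

/-- the Coxeter system of `K`. -/
noncomputable def cx : CoxeterSystem K.CM (K.CM).Group := CoxeterMatrix.toCoxeterSystem K.CM

/-- the geometric representation of the Coxeter group of `K` on `V`. -/
noncomputable def theta : (K.CM).Group →* AddAut V :=
  (K.cx).lift ⟨K.s, K.isLiftable⟩

@[simp] lemma theta_simple (i : Fin n) : K.theta ((K.cx).simple i) = K.s i :=
  (K.cx).lift_apply_simple K.isLiftable i

lemma theta_mem_Wgrp (w : (K.CM).Group) : K.theta w ∈ K.Wgrp := by
  induction w using CoxeterSystem.simple_induction K.cx with
  | simple i => rw [K.theta_simple i]; exact Subgroup.subset_closure ⟨i, rfl⟩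
  | one => rw [map_one]; exact one_mem _
  | mul w₁ w₂ h₁ h₂ => rw [map_mul]; exact mul_mem h₁ h₂

lemma exists_theta {x : AddAut V} (hx : x ∈ K.Wgrp) : ∃ w, K.theta w = x := by
  induction hx using Subgroup.closure_induction with
  | mem x hxx =>
    obtain ⟨i, rfl⟩ := hxx
    exact ⟨(K.cx).simple i, K.theta_simple i⟩
  | one => exact ⟨1, map_one _⟩
  | mul x y _ _ hx hy =>
    obtain ⟨w₁, rfl⟩ := hx; obtain ⟨w₂, rfl⟩ := hy
    exact ⟨w₁ * w₂, map_mul _ _ _⟩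
  | inv x _ hx =>
    obtain ⟨w₁, rfl⟩ := hx
    exact ⟨w₁⁻¹, map_inv _ _⟩

end KacMoody

namespace KacMoody

open CoxeterSystem

variable {n : ℕ} {V : Type} [AddCommGroup V] (K : KacMoody n V)

lemma _root_.mem_alt {B : Type*} {i j : B} : ∀ {q : ℕ} {y : B},
    y ∈ CoxeterSystem.alternatingWord i j q → y = i ∨ y = j := by
  intro q
  induction q with
  | zero => intro y hy; simp [CoxeterSystem.alternatingWord] at hy
  | succ q ih =>
    intro y hy
    rw [CoxeterSystem.alternatingWord_succ'] at hy
    rcases List.mem_cons.mp hy with rfl | hy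
    · split <;> simp
    · exact ih hy

lemma alt_image (i j : Fin n) (q : ℕ) :
    K.theta ((K.cx).wordProd (CoxeterSystem.alternatingWord i j q)) (K.alpha i)
      = (uS (K.pair i (K.alpha j)) (K.pair j (K.alpha i)) q).1 • K.alpha i
        + (uS (K.pair i (K.alpha j)) (K.pair j (K.alpha i)) q).2 • K.alpha j := by
  induction q with
  | zero =>
    show K.theta ((K.cx).wordProd []) (K.alpha i) = _
    rw [CoxeterSystem.wordProd_nil, map_one]
    simp [uS]
  | succ q ih =>
    rw [CoxeterSystem.alternatingWord_succ', CoxeterSystem.wordProd_cons, map_mul,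
      addAutOld_mul_apply, ih]
    by_cases hq : Even q
    · rw [if_pos hq, K.theta_simple, K.s_apply]
      simp only [uS, if_pos hq, map_add, map_zsmul, K.pair_self, smul_eq_mul]
      module
    · rw [if_neg hq, K.theta_simple, K.s_apply]
      simp only [uS, if_neg hq, map_add, map_zsmul, K.pair_self, smul_eq_mul]
      module

lemma min_word_alternating : ∀ (p : ℕ) (i j : Fin n) (ζ : List (Fin n)), ζ.length = p →
    (∀ y ∈ ζ, y = i ∨ y = j) →
    (∀ ζ' : List (Fin n), (∀ y ∈ ζ', y = i ∨ y = j) →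
        (K.cx).wordProd ζ' = (K.cx).wordProd (ζ ++ [j]) → p + 1 ≤ ζ'.length) →
    ζ ++ [j] = CoxeterSystem.alternatingWord i j (p + 1) := by
  intro p
  induction p using Nat.strong_induction_on with | _ p IHp =>
  intro i j ζ hlen hent hmin
  rcases List.eq_nil_or_concat ζ with rfl | ⟨ζ₁, y, rfl⟩
  · rw [CoxeterSystem.alternatingWord_succ]
    subst hlen
    rfl
  · rw [List.concat_eq_append] at *
    have hy : y = i ∨ y = j := hent y (by simp)
    have hlen1 : ζ₁.length + 1 = p := by simpa using hlen
    rcases hy with hcase | hcase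
    all_goals (have hcase' := hcase.symm; subst hcase')
    · -- last letter of ζ is i : recurse with roles swapped
      have hent1 : ∀ z ∈ ζ₁, z = j ∨ z = i := by
        intro z hz
        rcases hent z (by simp [hz]) with h | h
        · exact Or.inr h
        · exact Or.inl h
      have hmin1 : ∀ ζ' : List (Fin n), (∀ z ∈ ζ', z = j ∨ z = i) →
          (K.cx).wordProd ζ' = (K.cx).wordProd (ζ₁ ++ [i]) → ζ₁.length + 1 ≤ ζ'.length := by
        intro ζ' hζ'e hζ'π
        have h2 : (K.cx).wordProd (ζ' ++ [j]) = (K.cx).wordProd ((ζ₁ ++ [i]) ++ [j]) := by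
          rw [CoxeterSystem.wordProd_append, CoxeterSystem.wordProd_append, hζ'π]
        have h3 := hmin (ζ' ++ [j]) ?_ h2
        · have h4 : (ζ' ++ [j]).length = ζ'.length + 1 := by simp
          omega
        · intro z hz
          rcases List.mem_append.mp hz with hz | hz
          · rcases hζ'e z hz with h | h
            · exact Or.inr h
            · exact Or.inl h
          · simp at hz; exact Or.inr hz
      have hrec := IHp ζ₁.length (by omega) j i ζ₁ rfl hent1 hmin1
      rw [hrec, ← hlen1]
      rw [CoxeterSystem.alternatingWord_succ i j]
      rw [List.concat_eq_append]
    · -- last letter of ζ is j : contradiction with minimality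
      exfalso
      have hπ : (K.cx).wordProd ζ₁ = (K.cx).wordProd ((ζ₁ ++ [j]) ++ [j]) := by
        rw [CoxeterSystem.wordProd_append, CoxeterSystem.wordProd_append,
          CoxeterSystem.wordProd_singleton, mul_assoc, CoxeterSystem.simple_mul_simple_self,
          mul_one]
      have := hmin ζ₁ (fun z hz => hent z (by simp [hz])) hπ
      omega

lemma alt_shorter (i j : Fin n) (hm : K.CM i j ≠ 0) {q : ℕ} (hq : K.CM i j < q) :
    ∃ ζ : List (Fin n), (∀ y ∈ ζ, y = i ∨ y = j) ∧
      (K.cx).wordProd ζ = (K.cx).wordProd (CoxeterSystem.alternatingWord i j q) ∧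
      ζ.length < q := by
  rcases Nat.lt_or_ge q (K.CM i j * 2 + 1) with h2 | h2
  · -- q ≤ 2m : use the braid-flip lemma
    refine ⟨CoxeterSystem.alternatingWord j i (K.CM i j * 2 - q), ?_, ?_, ?_⟩
    · intro y hy
      rcases mem_alt hy with h | h
      · exact Or.inr h
      · exact Or.inl h
    · exact ((K.cx).prod_alternatingWord_eq_prod_alternatingWord_sub i j q (by omega)).symm
    · simp only [CoxeterSystem.length_alternatingWord]
      omega
  · -- q > 2m : use (s i * s j) ^ m = 1
    refine ⟨CoxeterSystem.alternatingWord i j (q - K.CM i j * 2), fun y hy => mem_alt hy,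
      ?_, ?_⟩
    · rw [(K.cx).prod_alternatingWord_eq_mul_pow, (K.cx).prod_alternatingWord_eq_mul_pow]
      have hpar : Even (q - K.CM i j * 2) ↔ Even q := by
        rw [Nat.even_sub (by omega)]
        simp
      have hdiv : q / 2 = (q - K.CM i j * 2) / 2 + K.CM i j := by omega
      rw [hdiv, pow_add, (K.cx).simple_mul_simple_pow i j, mul_one]
      by_cases hqe : Even q
      · rw [if_pos hqe, if_pos (hpar.mpr hqe)]
      · rw [if_neg hqe, if_neg (fun h => hqe (hpar.mp h))]
    · simp only [CoxeterSystem.length_alternatingWord]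
      omega

theorem Tpos : ∀ (N : ℕ) (w : (K.CM).Group) (i : Fin n), (K.cx).length w = N →
    ¬(K.cx).IsRightDescent w i → (K.theta w) (K.alpha i) ∈ K.QP := by
  intro N
  induction N using Nat.strong_induction_on with | _ N IH =>
  intro w i hN hdesc
  by_cases hw : w = 1
  · subst hw; rw [map_one]; simpa using K.QP_alpha i
  obtain ⟨j, hj⟩ := (K.cx).exists_rightDescent_of_ne_one hw
  have hij : i ≠ j := fun h => hdesc (h ▸ hj)
  -- minimize the length of v over factorizations w = v * (word in i, j)
  set S : Set ℕ := {k | ∃ x : (K.CM).Group, ∃ ω : List (Fin n),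
    (∀ y ∈ ω, y = i ∨ y = j) ∧ w = x * (K.cx).wordProd ω ∧
    (K.cx).length x + ω.length = (K.cx).length w ∧ (K.cx).length x = k} with hS
  have hPw : (K.cx).length w ∈ S := ⟨w, [], by simp, by simp, by simp, rfl⟩
  obtain ⟨v, ω, hent, hfact, hsum, hvlen⟩ := Nat.sInf_mem (⟨_, hPw⟩ : S.Nonempty)
  have hminP : ∀ k ∈ S, sInf S ≤ k := fun k hk => Nat.sInf_le hk
  -- no right descents of v at i or j
  have hnodesc : ∀ x : Fin n, x = i ∨ x = j → ¬(K.cx).IsRightDescent v x := by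
    rintro x hx hd
    have h1 : (K.cx).length (v * (K.cx).simple x) + 1 = (K.cx).length v := by
      rcases (K.cx).length_mul_simple v x with h | h
      · exfalso
        have := hd
        unfold CoxeterSystem.IsRightDescent at this
        omega
      · exact h
    have hmem : (K.cx).length (v * (K.cx).simple x) ∈ S := by
      refine ⟨v * (K.cx).simple x, x :: ω, ?_, ?_, ?_, rfl⟩
      · intro y hy
        rcases List.mem_cons.mp hy with rfl | hy
        · exact hx
        · exact hent y hy
      · rw [CoxeterSystem.wordProd_cons, ← mul_assoc, mul_assoc v,
          CoxeterSystem.simple_mul_simple_self, mul_one]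
        exact hfact
      · simp only [List.length_cons]
        omega
    have := hminP _ hmem
    omega
  -- ω is nonempty and v is shorter than w
  have hω : ω ≠ [] := by
    rintro rfl
    rw [CoxeterSystem.wordProd_nil, mul_one] at hfact
    exact hnodesc j (Or.inr rfl) (hfact ▸ hj)
  have hωpos : 0 < ω.length := List.length_pos_iff.mpr hω
  have hvltw : (K.cx).length v < (K.cx).length w := by omega
  -- minimality of ω as an {i, j}-word for its product
  have hωmin : ∀ ζ : List (Fin n), (∀ y ∈ ζ, y = i ∨ y = j) →
      (K.cx).wordProd ζ = (K.cx).wordProd ω → ω.length ≤ ζ.length := by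
    intro ζ hζ hπ
    by_contra hlt
    push_neg at hlt
    have hwle : (K.cx).length w ≤ (K.cx).length v + ζ.length := by
      calc (K.cx).length w = (K.cx).length (v * (K.cx).wordProd ζ) := by rw [← hπ] at hfact; rw [← hfact]
        _ ≤ (K.cx).length v + (K.cx).length ((K.cx).wordProd ζ) := (K.cx).length_mul_le _ _
        _ ≤ (K.cx).length v + ζ.length := by
            have := (K.cx).length_wordProd_le ζ
            omega
    omega
  -- decompose ω = ζ₁ ++ [last letter]
  obtain ⟨ζ₀, y, hωeq⟩ : ∃ ζ₀ y, ω = ζ₀ ++ [y] := by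
    rcases List.eq_nil_or_concat ω with rfl | ⟨ζ₀, y, h⟩
    · exact absurd rfl hω
    · exact ⟨ζ₀, y, by rw [h, List.concat_eq_append]⟩
  have hylast : y = i ∨ y = j := hent y (by rw [hωeq]; simp)
  have hζ₀len : ζ₀.length + 1 = ω.length := by rw [hωeq]; simp
  have hζ₁ : ω = ζ₀ ++ [j] := by
    rcases hylast with hyi | hyj
    · exfalso
      apply hdesc
      subst hyi
      have hws : w * (K.cx).simple y = v * (K.cx).wordProd ζ₀ := by
        rw [hfact, hωeq, CoxeterSystem.wordProd_append, CoxeterSystem.wordProd_singleton,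
          mul_assoc, mul_assoc, CoxeterSystem.simple_mul_simple_self, mul_one]
      show (K.cx).length (w * (K.cx).simple y) < (K.cx).length w
      rw [hws]
      have h1 := (K.cx).length_mul_le v ((K.cx).wordProd ζ₀)
      have h2 := (K.cx).length_wordProd_le ζ₀
      omega
    · rw [hωeq, hyj]
  -- ω is the alternating word of length L := ζ₀.length + 1
  have halt : ω = CoxeterSystem.alternatingWord i j (ζ₀.length + 1) := by
    rw [hζ₁]
    exact K.min_word_alternating ζ₀.length i j ζ₀ rfl
      (fun z hz => hent z (by rw [hζ₁]; exact List.mem_append.mpr (Or.inl hz)))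
      (fun ζ' hζ'e hζ'π => by
        have h5 := hωmin ζ' hζ'e (by rw [hζ₁]; exact hζ'π)
        omega)
  -- bound on the length of ω
  have hqm : K.CM i j = 0 ∨ ω.length < K.CM i j := by
    by_contra hcon
    push_neg at hcon
    obtain ⟨hm0, hmq⟩ := hcon
    rcases Nat.lt_or_ge (K.CM i j) ω.length with hlt | hge
    · obtain ⟨ζ, hζe, hζπ, hζl⟩ := K.alt_shorter i j hm0 hlt
      have h6 : (K.cx).wordProd ζ = (K.cx).wordProd ω := by
        rw [hζπ, ← hζ₀len, halt]
      have := hωmin ζ hζe h6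
      omega
    · have hqe : ζ₀.length + 1 = K.CM i j := by omega
      apply hdesc
      obtain ⟨m', hm'⟩ : ∃ m', K.CM i j = m' + 1 := ⟨K.CM i j - 1, by omega⟩
      have hbraid : (K.cx).wordProd (CoxeterSystem.alternatingWord i j (K.CM i j))
          = (K.cx).wordProd (CoxeterSystem.alternatingWord j i (K.CM i j)) := by
        have hb := (K.cx).wordProd_braidWord_eq i j
        unfold CoxeterSystem.braidWord at hb
        rw [K.CM.symmetric j i] at hb
        exact hb
      have hconcat : CoxeterSystem.alternatingWord j i (m' + 1)
          = CoxeterSystem.alternatingWord i j m' ++ [i] := by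
        rw [CoxeterSystem.alternatingWord_succ, List.concat_eq_append]
      have hπω : (K.cx).wordProd ω
          = (K.cx).wordProd (CoxeterSystem.alternatingWord i j m' ++ [i]) := by
        rw [halt, hqe, hbraid, hm', hconcat]
      have hws : w * (K.cx).simple i
          = v * (K.cx).wordProd (CoxeterSystem.alternatingWord i j m') := by
        rw [hfact, hπω, CoxeterSystem.wordProd_append, CoxeterSystem.wordProd_singleton,
          mul_assoc, mul_assoc, CoxeterSystem.simple_mul_simple_self, mul_one]
      show (K.cx).length (w * (K.cx).simple i) < (K.cx).length w
      rw [hws]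
      have h1 := (K.cx).length_mul_le v ((K.cx).wordProd (CoxeterSystem.alternatingWord i j m'))
      have h2 := (K.cx).length_wordProd_le (CoxeterSystem.alternatingWord i j m')
      rw [CoxeterSystem.length_alternatingWord] at h2
      omega
  -- positivity of the images of the simple roots under v
  have hvi : K.theta v (K.alpha i) ∈ K.QP :=
    IH ((K.cx).length v) (by omega) v i rfl (hnodesc i (Or.inl rfl))
  have hvj : K.theta v (K.alpha j) ∈ K.QP :=
    IH ((K.cx).length v) (by omega) v j rfl (hnodesc j (Or.inr rfl))
  -- positivity of the coefficients
  have hA : K.pair i (K.alpha j) ≤ 0 := K.pair_offdiag i j hij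
  have hB : K.pair j (K.alpha i) ≤ 0 := K.pair_offdiag j i (Ne.symm hij)
  have hXY : 0 ≤ (uS (K.pair i (K.alpha j)) (K.pair j (K.alpha i)) ω.length).1 ∧
      0 ≤ (uS (K.pair i (K.alpha j)) (K.pair j (K.alpha i)) ω.length).2 := by
    apply uS_nonneg_cases hA hB
    rw [K.CM_apply_ne hij] at hqm
    by_cases h0 : K.pair i (K.alpha j) * K.pair j (K.alpha i) = 0
    · have ha0 : K.pair i (K.alpha j) = 0 ∧ K.pair j (K.alpha i) = 0 := by
        rcases mul_eq_zero.mp h0 with h | h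
        · exact ⟨h, K.pair_zero_iff i j h⟩
        · exact ⟨K.pair_zero_iff j i h, h⟩
      rw [if_pos h0] at hqm
      exact Or.inl ⟨ha0.1, ha0.2, by omega⟩
    · rw [if_neg h0] at hqm
      by_cases h1 : K.pair i (K.alpha j) * K.pair j (K.alpha i) = 1
      · obtain ⟨ha1, hb1⟩ := (int_small_prod hA hB).1 h1
        rw [if_pos h1] at hqm
        exact Or.inr (Or.inl ⟨ha1, hb1, by omega⟩)
      · rw [if_neg h1] at hqm
        by_cases h2 : K.pair i (K.alpha j) * K.pair j (K.alpha i) = 2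
        · rw [if_pos h2] at hqm
          exact Or.inr (Or.inr (Or.inl ⟨(int_small_prod hA hB).2.1 h2, by omega⟩))
        · rw [if_neg h2] at hqm
          by_cases h3 : K.pair i (K.alpha j) * K.pair j (K.alpha i) = 3
          · rw [if_pos h3] at hqm
            exact Or.inr (Or.inr (Or.inr (Or.inl ⟨(int_small_prod hA hB).2.2 h3, by omega⟩)))
          · -- the product is at least 4
            have hge4 : 4 ≤ K.pair i (K.alpha j) * K.pair j (K.alpha i) := by
              have hnn : 0 ≤ K.pair i (K.alpha j) * K.pair j (K.alpha i) :=
                by nlinarith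
              omega
            exact Or.inr (Or.inr (Or.inr (Or.inr hge4)))
  -- conclude
  have himg := K.alt_image i j (ζ₀.length + 1)
  rw [← halt] at himg
  rw [hζ₀len] at himg
  rw [hfact, map_mul, addAutOld_mul_apply, himg, map_add, map_zsmul, map_zsmul]
  exact K.QP_add (K.QP_zsmul hvi hXY.1) (K.QP_zsmul hvj hXY.2)

end KacMoody

namespace KacMoody

open CoxeterSystem

variable {n : ℕ} {V : Type} [AddCommGroup V] (K : KacMoody n V)

lemma Tpos' (w : (K.CM).Group) (i : Fin n) (h : ¬(K.cx).IsRightDescent w i) :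
    (K.theta w) (K.alpha i) ∈ K.QP := K.Tpos _ w i rfl h

lemma s_alpha_self (i : Fin n) : K.s i (K.alpha i) = -(K.alpha i) := by
  rw [K.s_apply, K.pair_self]
  rw [two_zsmul]
  abel

lemma not_descent_mul_self {w : (K.CM).Group} {i : Fin n}
    (h : (K.cx).IsRightDescent w i) :
    ¬(K.cx).IsRightDescent (w * (K.cx).simple i) i := by
  unfold CoxeterSystem.IsRightDescent at *
  rw [(K.cx).simple_mul_simple_cancel_right]
  omega

lemma Tneg (w : (K.CM).Group) (i : Fin n) (h : (K.cx).IsRightDescent w i) :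
    -((K.theta w) (K.alpha i)) ∈ K.QP := by
  have hQ := K.Tpos' (w * (K.cx).simple i) i (K.not_descent_mul_self h)
  have heq : (K.theta (w * (K.cx).simple i)) (K.alpha i) = -((K.theta w) (K.alpha i)) := by
    rw [map_mul, addAutOld_mul_apply, K.theta_simple, K.s_alpha_self, map_neg]
  rw [← heq]
  exact hQ

lemma theta_mul_simple_apply (w : (K.CM).Group) (i : Fin n) (x : V) :
    (K.theta (w * (K.cx).simple i)) x
      = (K.theta w) x - (K.pair i x) • (K.theta w) (K.alpha i) := by
  rw [map_mul, addAutOld_mul_apply, K.theta_simple, K.s_apply, map_sub, map_zsmul]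

lemma dom_sub_mem (ν : V) (hdom : ∀ i, 0 ≤ K.pair i ν) :
    ∀ (N : ℕ) (w : (K.CM).Group), (K.cx).length w = N → ν - (K.theta w) ν ∈ K.QP := by
  intro N
  induction N using Nat.strong_induction_on with | _ N IH =>
  intro w hN
  by_cases hw : w = 1
  · subst hw
    rw [map_one]
    simpa using K.QP_zero
  obtain ⟨j, hj⟩ := (K.cx).exists_rightDescent_of_ne_one hw
  have hlen : (K.cx).length (w * (K.cx).simple j) + 1 = (K.cx).length w := by
    rcases (K.cx).length_mul_simple w j with h | h
    · exfalso; unfold CoxeterSystem.IsRightDescent at hj; omega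
    · exact h
  have hT := K.Tpos' (w * (K.cx).simple j) j (K.not_descent_mul_self hj)
  have IHw : ν - (K.theta (w * (K.cx).simple j)) ν ∈ K.QP :=
    IH ((K.cx).length (w * (K.cx).simple j)) (by omega) _ rfl
  have h1 : w = (w * (K.cx).simple j) * (K.cx).simple j :=
    ((K.cx).simple_mul_simple_cancel_right j).symm
  have hθ : (K.theta w) ν = (K.theta (w * (K.cx).simple j)) ν
      - (K.pair j ν) • (K.theta (w * (K.cx).simple j)) (K.alpha j) := by
    conv_lhs => rw [h1]
    rw [K.theta_mul_simple_apply]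
  have hexp : ν - (K.theta w) ν
      = (ν - (K.theta (w * (K.cx).simple j)) ν)
        + (K.pair j ν) • (K.theta (w * (K.cx).simple j)) (K.alpha j) := by
    rw [hθ]
    abel
  rw [hexp]
  exact K.QP_add IHw (K.QP_zsmul hT (hdom j))

lemma dom_stab (ν : V) (hdom : ∀ i, 0 ≤ K.pair i ν) :
    ∀ (N : ℕ) (w : (K.CM).Group), (K.cx).length w = N → (K.theta w) ν = ν →
      w ∈ Subgroup.closure {x : (K.CM).Group | ∃ ii, K.pair ii ν = 0 ∧ x = (K.cx).simple ii} := by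
  intro N
  induction N using Nat.strong_induction_on with | _ N IH =>
  intro w hN hfix
  by_cases hw : w = 1
  · subst hw; exact one_mem _
  obtain ⟨j, hj⟩ := (K.cx).exists_rightDescent_of_ne_one hw
  have hlen : (K.cx).length (w * (K.cx).simple j) + 1 = (K.cx).length w := by
    rcases (K.cx).length_mul_simple w j with h | h
    · exfalso; unfold CoxeterSystem.IsRightDescent at hj; omega
    · exact h
  have hTneg := K.Tneg w j hj
  have hpos := K.dom_sub_mem ν hdom ((K.cx).length (w * (K.cx).simple j)) (w * (K.cx).simple j) rfl
  have hexp : ν - (K.theta (w * (K.cx).simple j)) ν = (K.pair j ν) • (K.theta w) (K.alpha j) := by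
    rw [K.theta_mul_simple_apply, hfix]
    abel
  have hc0 : K.pair j ν = 0 := by
    by_contra hc
    have hcpos : 0 < K.pair j ν := lt_of_le_of_ne (hdom j) (Ne.symm hc)
    have h1 : (K.pair j ν) • (K.theta w) (K.alpha j) ∈ K.QP := hexp ▸ hpos
    have h2 : -((K.pair j ν) • (K.theta w) (K.alpha j)) ∈ K.QP := by
      rw [← smul_neg]
      exact K.QP_zsmul hTneg (le_of_lt hcpos)
    have h3 := K.eq_zero_of_QP_of_neg_QP h1 h2
    obtain ⟨d, hd⟩ := (K.mem_QP_iff).mp hTneg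
    have h4 : ∑ k, ((K.pair j ν) * (d k : ℤ)) • K.alpha k
        = ∑ k, ((0 : Fin n → ℤ) k) • K.alpha k := by
      have hl : ∑ k, ((K.pair j ν) * (d k : ℤ)) • K.alpha k
          = (K.pair j ν) • (-(K.theta w (K.alpha j))) := by
        rw [hd, Finset.smul_sum]
        exact Finset.sum_congr rfl fun k _ => (mul_smul _ _ _)
      rw [hl, smul_neg, h3, neg_zero]
      simp
    have h5 := K.coords_injZ h4
    have h6 : -(K.theta w (K.alpha j)) = 0 := by
      rw [hd]
      refine Finset.sum_eq_zero fun k _ => ?_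
      have hk := congrFun h5 k
      simp only [Pi.zero_apply] at hk
      rcases mul_eq_zero.mp hk with h | h
      · exact absurd h hc
      · rw [h, zero_smul]
    have h7 : K.theta w (K.alpha j) = 0 := neg_eq_zero.mp h6
    have h8 : K.alpha j = 0 := by
      apply (K.theta w).injective
      rw [h7, map_zero]
    exact K.alpha_ne_zero j h8
  have hfix' : (K.theta (w * (K.cx).simple j)) ν = ν := by
    rw [K.theta_mul_simple_apply, hc0, zero_smul, sub_zero, hfix]
  have hmem := IH ((K.cx).length (w * (K.cx).simple j)) (by omega) _ rfl hfix'
  have hgen : (K.cx).simple j ∈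
      Subgroup.closure {x : (K.CM).Group | ∃ ii, K.pair ii ν = 0 ∧ x = (K.cx).simple ii} :=
    Subgroup.subset_closure ⟨j, hc0, rfl⟩
  have hw' : w = (w * (K.cx).simple j) * (K.cx).simple j :=
    ((K.cx).simple_mul_simple_cancel_right j).symm
  rw [hw']
  exact mul_mem hmem hgen

end KacMoody

/-- **Lemma (circle stabilizers are generated by reflections).**
For every `λ ∈ Q' = ⋂_{w ∈ W} w∘Q⁻`, the stabilizer
`W_λ^∘ = {w ∈ W : w∘λ = λ}` of `λ` under the circle action is generated by
reflections in `W` (i.e. by `W`-conjugates of the simple reflections). -/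
theorem circle_stabilizer_generated_by_reflections
    (n : ℕ) (V : Type) [AddCommGroup V] (K : KacMoody n V)
    (ρ : V) (hρ : ∀ i, K.pair i ρ = 1) :
    ∀ lam ∈ K.Qprime ρ,
      ∃ S : Set (AddAut V),
        (∀ t ∈ S, ∃ u ∈ K.Wgrp, ∃ i, t = u * K.s i * u⁻¹) ∧
        (Subgroup.closure S : Set (AddAut V)) =
          {w : AddAut V | w ∈ K.Wgrp ∧ w (lam + ρ) - ρ = lam} := by
  classical
  intro lam hlam
  set μ := lam + ρ with hμdef
  have hQP : ∀ w : (K.CM).Group, ρ - (K.theta w) μ ∈ K.QP := by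
    intro w
    have h := hlam (K.theta w) (K.theta_mem_Wgrp w)
    simpa only [neg_sub] using h
  -- minimize the height of `ρ - w μ` over the orbit
  set H : (K.CM).Group → ℕ := fun w => K.htQ (ρ - (K.theta w) μ) with hH
  have hne : (Set.range H).Nonempty := ⟨H 1, Set.mem_range_self 1⟩
  obtain ⟨v₀, hv₀⟩ := Nat.sInf_mem hne
  set ν := (K.theta v₀) μ with hν
  have hdom : ∀ i, 0 ≤ K.pair i ν := by
    intro i
    have h1 : ρ - (K.theta ((K.cx).simple i * v₀)) μ
        = (ρ - ν) + (K.pair i ν) • K.alpha i := by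
      rw [map_mul, addAutOld_mul_apply, K.theta_simple, K.s_apply, ← hν]
      abel
    have h2 : ρ - ν ∈ K.QP := hQP v₀
    have h3 : (ρ - ν) + (K.pair i ν) • K.alpha i ∈ K.QP := by
      rw [← h1]; exact hQP _
    have h4 := K.htQ_add_zsmul h2 i (K.pair i ν) h3
    have h5 : sInf (Set.range H) ≤ H ((K.cx).simple i * v₀) := Nat.sInf_le ⟨_, rfl⟩
    have h6 : H ((K.cx).simple i * v₀) = K.htQ ((ρ - ν) + (K.pair i ν) • K.alpha i) := by
      rw [hH]; simp only []; rw [h1]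
    have h7 : H v₀ = K.htQ (ρ - ν) := by rw [hH]
    omega
  -- the generating set
  refine ⟨(fun ii => (K.theta v₀)⁻¹ * K.s ii * (K.theta v₀)) '' {ii | K.pair ii ν = 0},
    ?_, ?_⟩
  · rintro t ⟨ii, _, rfl⟩
    exact ⟨(K.theta v₀)⁻¹, inv_mem (K.theta_mem_Wgrp v₀), ii, by rw [inv_inv]⟩
  · have hsalpha : ∀ ii : Fin n, K.pair ii ν = 0 → K.s ii ν = ν := by
      intro ii hii
      rw [K.s_apply, hii, zero_smul, sub_zero]
    have hinvν : ((K.theta v₀)⁻¹ : AddAut V) ν = μ := by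
      rw [hν, ← addAutOld_mul_apply, inv_mul_cancel, addAutOld_one_apply]
    ext g
    simp only [SetLike.mem_coe, Set.mem_setOf_eq]
    constructor
    · intro hg
      have key : g ∈ K.Wgrp ∧ g μ = μ := by
        induction hg using Subgroup.closure_induction with
        | mem t ht =>
          obtain ⟨ii, hii, rfl⟩ := ht
          constructor
          · exact mul_mem (mul_mem (inv_mem (K.theta_mem_Wgrp v₀))
              (Subgroup.subset_closure ⟨ii, rfl⟩)) (K.theta_mem_Wgrp v₀)
          · rw [addAutOld_mul_apply, addAutOld_mul_apply, ← hν, hsalpha ii hii, hinvν]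
        | one => exact ⟨one_mem _, by rw [addAutOld_one_apply]⟩
        | mul x y _ _ hx hy =>
          exact ⟨mul_mem hx.1 hy.1, by rw [addAutOld_mul_apply, hy.2, hx.2]⟩
        | inv x _ hx =>
          refine ⟨inv_mem hx.1, ?_⟩
          have := hx.2
          conv_lhs => rw [← this]
          rw [← addAutOld_mul_apply, inv_mul_cancel, addAutOld_one_apply]
      exact ⟨key.1, by rw [hμdef] at key ⊢; rw [key.2]; abel⟩
    · rintro ⟨hgW, hgfix⟩
      have hgμ : g μ = μ := by
        rw [hμdef]
        exact sub_eq_iff_eq_add.mp hgfix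
      obtain ⟨wh, hwh⟩ := K.exists_theta hgW
      have hufix : (K.theta (v₀ * wh * v₀⁻¹)) ν = ν := by
        rw [map_mul, map_mul, map_inv, addAutOld_mul_apply, addAutOld_mul_apply, hinvν, hwh, hgμ, hν]
      have humem := K.dom_stab ν hdom ((K.cx).length (v₀ * wh * v₀⁻¹)) _ rfl hufix
      have hwheq : wh = v₀⁻¹ * (v₀ * wh * v₀⁻¹) * v₀ := by group
      have hgeq : g = (K.theta v₀)⁻¹ * K.theta (v₀ * wh * v₀⁻¹) * K.theta v₀ := by
        rw [← hwh, hwheq]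
        simp [map_mul, map_inv, mul_assoc]
      rw [hgeq]
      have : ∀ u ∈ Subgroup.closure
          {x : (K.CM).Group | ∃ ii, K.pair ii ν = 0 ∧ x = (K.cx).simple ii},
          (K.theta v₀)⁻¹ * K.theta u * K.theta v₀ ∈ Subgroup.closure
            ((fun ii => (K.theta v₀)⁻¹ * K.s ii * (K.theta v₀)) '' {ii | K.pair ii ν = 0}) := by
        intro u hu
        induction hu using Subgroup.closure_induction with
        | mem x hx =>
          obtain ⟨ii, hii, rfl⟩ := hx
          rw [K.theta_simple]
          exact Subgroup.subset_closure ⟨ii, hii, rfl⟩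
        | one =>
          rw [map_one, mul_one, inv_mul_cancel]
          exact one_mem _
        | mul x y _ _ hx hy =>
          have heq : (K.theta v₀)⁻¹ * K.theta (x * y) * K.theta v₀
              = ((K.theta v₀)⁻¹ * K.theta x * K.theta v₀)
                * ((K.theta v₀)⁻¹ * K.theta y * K.theta v₀) := by
            rw [map_mul]; group
          rw [heq]
          exact mul_mem hx hy
        | inv x _ hx =>
          have heq : (K.theta v₀)⁻¹ * K.theta x⁻¹ * K.theta v₀
              = ((K.theta v₀)⁻¹ * K.theta x * K.theta v₀)⁻¹ := by
            rw [map_inv]; group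
          rw [heq]
          exact inv_mem hx
      exact this _ humem
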